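/- For an isometry w of a euclidean space E with move-set in standard form Mov(w) = U + μ (with μ ∈ U^⊥), the space of directions of the min-set Min(w) is the orthogonal complement U^⊥ of the space of directions of the move-set. -/

import Mathlib

/-- For an isometry `w` of a euclidean space with move-set in standard form
`Mov(w) = U + μ` with `μ ∈ U ᗮ`, the space of directions of the min-set `Min(w)` is
the orthogonal complement `U ᗮ` of the space of directions of the move-set. -/
theorem direction_minSet_eq_orthogonal
    {V E : Type*} [NormedAddCommGroup V] [InnerProductSpace ℝ V] [FiniteDimensional ℝ V]
    [MetricSpace E] [NormedAddTorsor V E] (w : E ≃ᵢ E)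
    (U : Submodule ℝ V) (μ : V) (hμ : μ ∈ Uᗮ)
    (hMov : {v : V | ∃ x : E, w x -ᵥ x = v} = (fun u => u + μ) '' (U : Set V)) :
    vectorSpan ℝ {x : E | ∀ y : E, dist (w x) x ≤ dist (w y) y} = Uᗮ := by
  classical
  set A := w.toRealAffineIsometryEquiv with hA
  set L := A.linearIsometryEquiv with hL
  have hcoe : ∀ x : E, A x = w x := fun x => rfl
  have hwv : ∀ (v : V) (x : E), w (v +ᵥ x) = L v +ᵥ w x := by
    intro v x
    rw [← hcoe, ← hcoe, A.map_vadd]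
  -- the linear map `L - 1`
  set f : V →ₗ[ℝ] V := L.toLinearEquiv.toLinearMap - LinearMap.id with hf
  have hfv : ∀ v : V, f v = L v - v := fun v => rfl
  -- a point realizing μ
  have hμMov : μ ∈ {v : V | ∃ x : E, w x -ᵥ x = v} := by
    rw [hMov]; exact ⟨0, U.zero_mem, by simp⟩
  obtain ⟨x₀, hx₀⟩ := hμMov
  -- the key computation
  have hkey : ∀ v : V, w (v +ᵥ x₀) -ᵥ (v +ᵥ x₀) = f v + μ := by
    intro v
    rw [hwv, vadd_vsub_assoc, vsub_vadd_eq_vsub_sub, hx₀, hfv]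
    abel
  -- range f = U
  have hU : LinearMap.range f = U := by
    ext u
    constructor
    · rintro ⟨v, rfl⟩
      have hm : w (v +ᵥ x₀) -ᵥ (v +ᵥ x₀) ∈ {v : V | ∃ x : E, w x -ᵥ x = v} :=
        ⟨v +ᵥ x₀, rfl⟩
      rw [hMov] at hm
      obtain ⟨u', hu', hueq⟩ := hm
      rw [hkey] at hueq
      have : u' = f v := by exact add_right_cancel hueq
      rwa [← this]
    · intro hu
      have : u + μ ∈ {v : V | ∃ x : E, w x -ᵥ x = v} := by
        rw [hMov]; exact ⟨u, hu, rfl⟩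
      obtain ⟨x, hx⟩ := this
      refine ⟨x -ᵥ x₀, ?_⟩
      have := hkey (x -ᵥ x₀)
      rw [vsub_vadd, hx] at this
      exact add_right_cancel this.symm
  -- ker f ≤ Uᗮ
  have hker_le : LinearMap.ker f ≤ Uᗮ := by
    intro v hv
    have hLv : L v = v := by
      have : f v = 0 := hv
      rw [hfv] at this
      exact sub_eq_zero.mp this
    rw [Submodule.mem_orthogonal]
    intro u hu
    rw [← hU] at hu
    obtain ⟨z, rfl⟩ := hu
    rw [hfv]
    have h1 : inner ℝ (L z) v = (inner ℝ z v : ℝ) := by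
      conv_lhs => rw [← hLv]
      exact L.inner_map_map z v
    rw [inner_sub_left, h1, sub_self]
  -- dimension count : ker f = Uᗮ
  have hker : LinearMap.ker f = Uᗮ := by
    apply Submodule.eq_of_le_of_finrank_eq hker_le
    have h1 := LinearMap.finrank_range_add_finrank_ker f
    have h2 := Submodule.finrank_add_finrank_orthogonal (K := U)
    rw [hU] at h1
    omega
  -- minimal norm characterization
  have hrepr : ∀ y : E, ∃ u ∈ U, w y -ᵥ y = u + μ := by
    intro y
    have : w y -ᵥ y ∈ {v : V | ∃ x : E, w x -ᵥ x = v} := ⟨y, rfl⟩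
    rw [hMov] at this
    obtain ⟨u, hu, huy⟩ := this
    exact ⟨u, hu, huy.symm⟩
  have hperp : ∀ u ∈ U, ‖u + μ‖ ^ 2 = ‖u‖ ^ 2 + ‖μ‖ ^ 2 := by
    intro u hu
    have h0 : (inner ℝ u μ : ℝ) = 0 := (Submodule.mem_orthogonal U μ).mp hμ u hu
    rw [norm_add_sq_real, h0]
    ring
  have hlow : ∀ y : E, ‖μ‖ ≤ ‖w y -ᵥ y‖ := by
    intro y
    obtain ⟨u, hu, huy⟩ := hrepr y
    rw [huy]
    have := hperp u hu
    nlinarith [norm_nonneg u, norm_nonneg μ, norm_nonneg (u + μ)]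
  have hdist : ∀ x : E, dist (w x) x = ‖w x -ᵥ x‖ := fun x => dist_eq_norm_vsub V _ _
  have hmin : {x : E | ∀ y : E, dist (w x) x ≤ dist (w y) y} = {x : E | w x -ᵥ x = μ} := by
    ext x
    simp only [Set.mem_setOf_eq]
    constructor
    · intro hx
      have h1 : ‖w x -ᵥ x‖ ≤ ‖μ‖ := by
        have := hx x₀
        rw [hdist, hdist, hx₀] at this
        exact this
      obtain ⟨u, hu, hux⟩ := hrepr x
      have h2 := hperp u hu
      have h3 : ‖u‖ = 0 := by
        rw [hux] at h1
        nlinarith [norm_nonneg u, norm_nonneg μ, norm_nonneg (u + μ)]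
      have : u = 0 := norm_eq_zero.mp h3
      rw [hux, this, zero_add]
    · intro hx y
      rw [hdist, hdist, hx]
      exact hlow y
  rw [hmin, ← hker]
  apply le_antisymm
  · rw [vectorSpan_def]
    rw [Submodule.span_le]
    rintro v ⟨x, hx, y, hy, rfl⟩
    simp only [Set.mem_setOf_eq] at hx hy
    have hwx : w x = μ +ᵥ x := by rwa [eq_vadd_iff_vsub_eq]
    have hwy : w y = μ +ᵥ y := by rwa [eq_vadd_iff_vsub_eq]
    have hLxy : L (x -ᵥ y) = x -ᵥ y := by
      have := A.map_vsub x y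
      rw [hcoe, hcoe, hwx, hwy, vadd_vsub_vadd_cancel_left] at this
      exact this
    show f (x -ᵥ y) = 0
    rw [hfv, hLxy, sub_self]
  · intro v hv
    have hfv0 : f v = 0 := hv
    have h1 : x₀ ∈ {x : E | w x -ᵥ x = μ} := hx₀
    have h2 : v +ᵥ x₀ ∈ {x : E | w x -ᵥ x = μ} := by
      show w (v +ᵥ x₀) -ᵥ (v +ᵥ x₀) = μ
      rw [hkey, hfv0, zero_add]
    have := vsub_mem_vectorSpan ℝ h2 h1
    rwa [vadd_vsub] at this
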